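/- Let T ≥ 1 and let θ, X_0,…,X_{T−1}, Y_1,…,Y_T be random variables on a common probability space taking values in finite sets. Assume (i) for every 0 ≤ t ≤ T−1, I(X_t ; θ | X_{0:t−1}, Y_{1:t}) = 0, and (ii) for every 0 ≤ t ≤ T−1, Y_{t+1} is conditionally independent of (X_{t+1},…,X_{T−1}) given (θ, X_{0:t}, Y_{1:t}). Then (1/T)·∑_{t=0}^{T−1} H(Y_{t+1} | X_{0:t}, Y_{1:t}) − (1/T)·H(Y_{1:T} | θ, X_{0:T−1}) = I(θ ; D_T)/T; that is, the optimal (Bayes) estimation error over horizon T equals the total information I(θ ; D_T)/T. -/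
import Mathlib


/-!
Statement 0: For a data stream `X_0, Y_1, …, X_{T-1}, Y_T` of finite-valued random variables
and a latent variable `θ`, if (i) each input `X_t` carries no information about `θ` beyond the
past data, and (ii) each label `Y_{t+1}` is conditionally independent of future inputs given
`(θ, H_t)`, then the optimal (Bayes) estimation error over horizon `T`,
`(1/T)·∑_t H(Y_{t+1}|H_t) − H(Y_{1:T}|θ, X_{0:T−1})/T`, equals `I(θ; D_T)/T`.

Conditional independence is expressed as vanishing conditional mutual information.
-/

open scoped Classical

noncomputable section

/-- Probability of the event `X = a` under the pmf `p` on a finite sample space. -/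
def pr {Ω : Type*} [Fintype Ω] (p : Ω → ℝ) {A : Type*} (X : Ω → A) (a : A) : ℝ :=
  ∑ ω, if X ω = a then p ω else 0

/-- Shannon entropy of a random variable (in nats). -/
def entropy {Ω : Type*} [Fintype Ω] (p : Ω → ℝ) {A : Type*} [Fintype A] (X : Ω → A) : ℝ :=
  ∑ a, Real.negMulLog (pr p X a)

/-- Conditional entropy `H(X|Y) = H(X,Y) - H(Y)` (in nats). -/
def condEntropy {Ω : Type*} [Fintype Ω] (p : Ω → ℝ) {A B : Type*} [Fintype A] [Fintype B]
    (X : Ω → A) (Y : Ω → B) : ℝ :=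
  entropy p (fun ω => (X ω, Y ω)) - entropy p Y

/-- Mutual information `I(X;Y) = H(X) + H(Y) - H(X,Y)` (in nats). -/
def mutualInfo {Ω : Type*} [Fintype Ω] (p : Ω → ℝ) {A B : Type*} [Fintype A] [Fintype B]
    (X : Ω → A) (Y : Ω → B) : ℝ :=
  entropy p X + entropy p Y - entropy p (fun ω => (X ω, Y ω))

/-- Conditional mutual information `I(X;Y|Z) = H(X,Z) + H(Y,Z) - H(X,Y,Z) - H(Z)` (in nats). -/
def condMutualInfo {Ω : Type*} [Fintype Ω] (p : Ω → ℝ) {A B C : Type*}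
    [Fintype A] [Fintype B] [Fintype C] (X : Ω → A) (Y : Ω → B) (Z : Ω → C) : ℝ :=
  entropy p (fun ω => (X ω, Z ω)) + entropy p (fun ω => (Y ω, Z ω))
    - entropy p (fun ω => ((X ω, Y ω), Z ω)) - entropy p Z

/-- The history `H_t = (X_{0:t}, Y_{1:t})`, as a random variable. -/
def histRV {Ω 𝒳 𝒴 : Type*} {T : ℕ} (X : Fin T → Ω → 𝒳) (Y : Fin T → Ω → 𝒴)
    (t : Fin T) (ω : Ω) : (Fin ((t : ℕ) + 1) → 𝒳) × (Fin (t : ℕ) → 𝒴) :=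
  (fun i => X (Fin.castLE t.isLt i) ω, fun i => Y (Fin.castLE (le_of_lt t.isLt) i) ω)

/-- The past data `(X_{0:t-1}, Y_{1:t})` strictly before the input `X_t`. -/
def pastRV {Ω 𝒳 𝒴 : Type*} {T : ℕ} (X : Fin T → Ω → 𝒳) (Y : Fin T → Ω → 𝒴)
    (t : Fin T) (ω : Ω) : (Fin (t : ℕ) → 𝒳) × (Fin (t : ℕ) → 𝒴) :=
  (fun i => X (Fin.castLE (le_of_lt t.isLt) i) ω, fun i => Y (Fin.castLE (le_of_lt t.isLt) i) ω)

/-- The future inputs `(X_{t+1}, …, X_{T-1})`, as a random variable. -/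
def futureRV {Ω 𝒳 : Type*} {T : ℕ} (X : Fin T → Ω → 𝒳) (t : Fin T) (ω : Ω) :
    Fin (T - 1 - (t : ℕ)) → 𝒳 :=
  fun i => X ⟨(t : ℕ) + 1 + (i : ℕ), by have h1 := t.isLt; have h2 := i.isLt; omega⟩ ω


section Aux
variable {Ω : Type*} [Fintype Ω]

lemma pr_congr_fiber {A B : Type*} (p : Ω → ℝ) (X : Ω → A) (Y : Ω → B)
    (h : ∀ ω ω', X ω = X ω' ↔ Y ω = Y ω') (ω0 : Ω) :
    pr p X (X ω0) = pr p Y (Y ω0) := by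
  unfold pr
  refine Finset.sum_congr rfl fun ω _ => ?_
  by_cases hx : X ω = X ω0
  · rw [if_pos hx, if_pos ((h ω ω0).mp hx)]
  · rw [if_neg hx, if_neg (fun hy => hx ((h ω ω0).mpr hy))]

lemma entropy_congr {A B : Type*} [Fintype A] [Fintype B] (p : Ω → ℝ) (X : Ω → A) (Y : Ω → B)
    (h : ∀ ω ω', X ω = X ω' ↔ Y ω = Y ω') : entropy p X = entropy p Y := by
  unfold entropy
  have hwX : ∀ a ∈ Finset.univ.filter (fun a => pr p X a ≠ 0), ∃ ω, X ω = a := by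
    intro a ha
    simp only [Finset.mem_filter] at ha
    have ha2 := ha.2
    unfold pr at ha2
    obtain ⟨ω, -, hω⟩ := Finset.exists_ne_zero_of_sum_ne_zero ha2
    refine ⟨ω, ?_⟩
    by_contra hc
    exact hω (if_neg hc)
  have hwY : ∀ b ∈ Finset.univ.filter (fun b => pr p Y b ≠ 0), ∃ ω, Y ω = b := by
    intro b hb
    simp only [Finset.mem_filter] at hb
    have hb2 := hb.2
    unfold pr at hb2
    obtain ⟨ω, -, hω⟩ := Finset.exists_ne_zero_of_sum_ne_zero hb2
    refine ⟨ω, ?_⟩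
    by_contra hc
    exact hω (if_neg hc)
  rw [← Finset.sum_filter_of_ne (p := fun a => pr p X a ≠ 0)
      (fun a _ hne hz => hne (by rw [hz]; exact Real.negMulLog_zero)),
    ← Finset.sum_filter_of_ne (p := fun b => pr p Y b ≠ 0)
      (fun b _ hne hz => hne (by rw [hz]; exact Real.negMulLog_zero))]
  refine Finset.sum_bij' (fun a ha => Y (Classical.choose (hwX a ha)))
    (fun b hb => X (Classical.choose (hwY b hb))) ?_ ?_ ?_ ?_ ?_
  · intro a ha
    have hs := Classical.choose_spec (hwX a ha)
    simp only [Finset.mem_filter, Finset.mem_univ, true_and]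
    have := pr_congr_fiber p X Y h (Classical.choose (hwX a ha))
    rw [hs] at this
    rw [← this]
    exact (Finset.mem_filter.mp ha).2
  · intro b hb
    have hs := Classical.choose_spec (hwY b hb)
    simp only [Finset.mem_filter, Finset.mem_univ, true_and]
    have := pr_congr_fiber p X Y h (Classical.choose (hwY b hb))
    rw [hs] at this
    rw [this]
    exact (Finset.mem_filter.mp hb).2
  · intro a ha
    have hmem : Y (Classical.choose (hwX a ha)) ∈
        Finset.univ.filter (fun b => pr p Y b ≠ 0) := by
      simp only [Finset.mem_filter, Finset.mem_univ, true_and]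
      have := pr_congr_fiber p X Y h (Classical.choose (hwX a ha))
      rw [Classical.choose_spec (hwX a ha)] at this
      rw [← this]
      exact (Finset.mem_filter.mp ha).2
    have h2 : Y (Classical.choose (hwY _ hmem)) = Y (Classical.choose (hwX a ha)) :=
      Classical.choose_spec (hwY _ hmem)
    have h3 : X (Classical.choose (hwY _ hmem)) = X (Classical.choose (hwX a ha)) :=
      (h _ _).mpr h2
    rw [Classical.choose_spec (hwX a ha)] at h3
    exact h3
  · intro b hb
    have hmem : X (Classical.choose (hwY b hb)) ∈
        Finset.univ.filter (fun a => pr p X a ≠ 0) := by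
      simp only [Finset.mem_filter, Finset.mem_univ, true_and]
      have := pr_congr_fiber p X Y h (Classical.choose (hwY b hb))
      rw [Classical.choose_spec (hwY b hb)] at this
      rw [this]
      exact (Finset.mem_filter.mp hb).2
    have h2 : X (Classical.choose (hwX _ hmem)) = X (Classical.choose (hwY b hb)) :=
      Classical.choose_spec (hwX _ hmem)
    have h3 : Y (Classical.choose (hwX _ hmem)) = Y (Classical.choose (hwY b hb)) :=
      (h _ _).mp h2
    rw [Classical.choose_spec (hwY b hb)] at h3
    exact h3
  · intro a ha
    have := pr_congr_fiber p X Y h (Classical.choose (hwX a ha))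
    rw [Classical.choose_spec (hwX a ha)] at this
    rw [this]

lemma entropy_const {A : Type*} [Fintype A] (p : Ω → ℝ) (hp1 : ∑ ω, p ω = 1) (c : A) :
    entropy p (fun _ => c) = 0 := by
  unfold entropy
  refine Finset.sum_eq_zero fun a _ => ?_
  have : pr p (fun _ => c) a = if c = a then 1 else 0 := by
    unfold pr
    split_ifs with hc
    · subst hc; simpa using hp1
    · simp [hc]
  rw [this]
  split_ifs
  · exact Real.negMulLog_one
  · exact Real.negMulLog_zero

lemma pref_iff {T : ℕ} {𝒳 : Type*} (X : Fin T → Ω → 𝒳) (s : ℕ) (ω ω' : Ω) :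
    ((fun i : Fin T => if (i : ℕ) < s then some (X i ω) else none) =
      (fun i : Fin T => if (i : ℕ) < s then some (X i ω') else none)) ↔
    (∀ i : Fin T, (i : ℕ) < s → X i ω = X i ω') := by
  rw [funext_iff]
  constructor
  · intro h i hi
    have := h i
    rw [if_pos hi, if_pos hi] at this
    exact Option.some_injective _ this
  · intro h i
    by_cases hi : (i : ℕ) < s
    · rw [if_pos hi, if_pos hi, h i hi]
    · rw [if_neg hi, if_neg hi]

lemma cast_iff {T n : ℕ} {𝒳 : Type*} (hn : n ≤ T) (X : Fin T → Ω → 𝒳) (ω ω' : Ω) :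
    ((fun i : Fin n => X (Fin.castLE hn i) ω) = fun i => X (Fin.castLE hn i) ω') ↔
    (∀ i : Fin T, (i : ℕ) < n → X i ω = X i ω') := by
  rw [funext_iff]
  constructor
  · intro h i hi
    simpa using h ⟨(i : ℕ), hi⟩
  · intro h i
    exact h (Fin.castLE hn i) i.isLt

lemma all_iff {T : ℕ} {𝒳 : Type*} (X : Fin T → Ω → 𝒳) (ω ω' : Ω) :
    ((fun i : Fin T => X i ω) = fun i => X i ω') ↔
    (∀ i : Fin T, (i : ℕ) < T → X i ω = X i ω') := by
  rw [funext_iff]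
  exact ⟨fun h i _ => h i, fun h i => h i i.isLt⟩

lemma future_iff {𝒳 : Type*} {T : ℕ} (X : Fin T → Ω → 𝒳) (t : Fin T) (ω ω' : Ω) :
    futureRV X t ω = futureRV X t ω' ↔
    (∀ i : Fin T, (t : ℕ) < (i : ℕ) → X i ω = X i ω') := by
  unfold futureRV
  rw [funext_iff]
  constructor
  · intro h i hi
    have h2 := h ⟨(i : ℕ) - ((t : ℕ) + 1), by omega⟩
    have e2 : (⟨(t : ℕ) + 1 + ((i : ℕ) - ((t : ℕ) + 1)),
        by have := i.isLt; omega⟩ : Fin T) = i := Fin.ext (by simp; omega)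
    simpa [e2] using h2
  · intro h i
    exact h ⟨(t : ℕ) + 1 + (i : ℕ), by have := i.isLt; omega⟩
      (show (t : ℕ) < (t : ℕ) + 1 + (i : ℕ) by omega)

lemma merge_one {T : ℕ} (t : Fin T) (P : Fin T → Prop) :
    (P t ∧ ∀ i : Fin T, (i : ℕ) < (t : ℕ) → P i) ↔
    (∀ i : Fin T, (i : ℕ) < (t : ℕ) + 1 → P i) := by
  constructor
  · rintro ⟨h0, h⟩ i hi
    rcases Nat.lt_or_ge (i : ℕ) (t : ℕ) with h' | h'
    · exact h i h'
    · have hit : i = t := Fin.ext (by omega)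
      rw [hit]; exact h0
  · intro h
    exact ⟨h t (by omega), fun i hi => h i (by omega)⟩

lemma merge_future {T : ℕ} (t : Fin T) (P : Fin T → Prop) :
    ((∀ i : Fin T, (t : ℕ) < (i : ℕ) → P i) ∧ ∀ i : Fin T, (i : ℕ) < (t : ℕ) + 1 → P i) ↔
    (∀ i : Fin T, (i : ℕ) < T → P i) := by
  constructor
  · rintro ⟨hf, hp⟩ i _
    rcases Nat.lt_or_ge (i : ℕ) ((t : ℕ) + 1) with h' | h'
    · exact hp i h'
    · exact hf i (by omega)
  · intro h
    exact ⟨fun i _ => h i i.isLt, fun i _ => h i i.isLt⟩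

lemma triv_pref {T : ℕ} (P : Fin T → Prop) :
    (∀ i : Fin T, (i : ℕ) < 0 → P i) ↔ True :=
  iff_true_intro fun _ hi => absurd hi (Nat.not_lt_zero _)

end Aux

/-- Canonical entropy of `(X_{0:s-1}, Y_{0:r-1})`. -/
def EE {Ω 𝒳 𝒴 : Type*} [Fintype Ω] [Fintype 𝒳] [Fintype 𝒴] (p : Ω → ℝ) {T : ℕ}
    (X : Fin T → Ω → 𝒳) (Y : Fin T → Ω → 𝒴) (s r : ℕ) : ℝ :=
  entropy p (fun ω => ((fun i : Fin T => if (i : ℕ) < s then some (X i ω) else none),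
    (fun i : Fin T => if (i : ℕ) < r then some (Y i ω) else none)))

/-- Canonical entropy of `(θ, X_{0:s-1}, Y_{0:r-1})`. -/
def FF {Ω Θ 𝒳 𝒴 : Type*} [Fintype Ω] [Fintype Θ] [Fintype 𝒳] [Fintype 𝒴] (p : Ω → ℝ) {T : ℕ}
    (θ : Ω → Θ) (X : Fin T → Ω → 𝒳) (Y : Fin T → Ω → 𝒴) (s r : ℕ) : ℝ :=
  entropy p (fun ω => (θ ω, (fun i : Fin T => if (i : ℕ) < s then some (X i ω) else none),
    (fun i : Fin T => if (i : ℕ) < r then some (Y i ω) else none)))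

section Ident
variable {Ω Θ 𝒳 𝒴 : Type*} [Fintype Ω] [Fintype Θ] [Fintype 𝒳] [Fintype 𝒴]
  (p : Ω → ℝ) {T : ℕ} (θ : Ω → Θ) (X : Fin T → Ω → 𝒳) (Y : Fin T → Ω → 𝒴)

lemma ident1 (t : Fin T) :
    entropy p (fun ω => (Y t ω, histRV X Y t ω)) = EE p X Y ((t : ℕ) + 1) ((t : ℕ) + 1) := by
  unfold EE
  refine entropy_congr p _ _ fun ω ω' => ?_
  simp only [histRV, Prod.mk.injEq]
  rw [cast_iff t.isLt X, cast_iff (le_of_lt t.isLt) Y,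
    pref_iff X ((t : ℕ) + 1), pref_iff Y ((t : ℕ) + 1),
    ← merge_one t (fun i => Y i ω = Y i ω')]
  tauto

lemma ident2 (t : Fin T) :
    entropy p (histRV X Y t) = EE p X Y ((t : ℕ) + 1) (t : ℕ) := by
  unfold EE
  refine entropy_congr p _ _ fun ω ω' => ?_
  simp only [histRV, Prod.mk.injEq]
  rw [cast_iff t.isLt X, cast_iff (le_of_lt t.isLt) Y,
    pref_iff X ((t : ℕ) + 1), pref_iff Y (t : ℕ)]

lemma ident3 (t : Fin T) :
    entropy p (fun ω => (X t ω, pastRV X Y t ω)) = EE p X Y ((t : ℕ) + 1) (t : ℕ) := by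
  unfold EE
  refine entropy_congr p _ _ fun ω ω' => ?_
  simp only [pastRV, Prod.mk.injEq]
  rw [cast_iff (le_of_lt t.isLt) X, cast_iff (le_of_lt t.isLt) Y,
    pref_iff X ((t : ℕ) + 1), pref_iff Y (t : ℕ),
    ← merge_one t (fun i => X i ω = X i ω')]
  tauto

lemma ident4 (t : Fin T) :
    entropy p (fun ω => (θ ω, pastRV X Y t ω)) = FF p θ X Y (t : ℕ) (t : ℕ) := by
  unfold FF
  refine entropy_congr p _ _ fun ω ω' => ?_
  simp only [pastRV, Prod.mk.injEq]
  rw [cast_iff (le_of_lt t.isLt) X, cast_iff (le_of_lt t.isLt) Y,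
    pref_iff X (t : ℕ), pref_iff Y (t : ℕ)]

lemma ident5 (t : Fin T) :
    entropy p (fun ω => ((X t ω, θ ω), pastRV X Y t ω)) = FF p θ X Y ((t : ℕ) + 1) (t : ℕ) := by
  unfold FF
  refine entropy_congr p _ _ fun ω ω' => ?_
  simp only [pastRV, Prod.mk.injEq]
  rw [cast_iff (le_of_lt t.isLt) X, cast_iff (le_of_lt t.isLt) Y,
    pref_iff X ((t : ℕ) + 1), pref_iff Y (t : ℕ),
    ← merge_one t (fun i => X i ω = X i ω')]
  tauto

lemma ident6 (t : Fin T) :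
    entropy p (pastRV X Y t) = EE p X Y (t : ℕ) (t : ℕ) := by
  unfold EE
  refine entropy_congr p _ _ fun ω ω' => ?_
  simp only [pastRV, Prod.mk.injEq]
  rw [cast_iff (le_of_lt t.isLt) X, cast_iff (le_of_lt t.isLt) Y,
    pref_iff X (t : ℕ), pref_iff Y (t : ℕ)]

lemma ident7 (t : Fin T) :
    entropy p (fun ω => (Y t ω, (θ ω, histRV X Y t ω)))
      = FF p θ X Y ((t : ℕ) + 1) ((t : ℕ) + 1) := by
  unfold FF
  refine entropy_congr p _ _ fun ω ω' => ?_
  simp only [histRV, Prod.mk.injEq]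
  rw [cast_iff t.isLt X, cast_iff (le_of_lt t.isLt) Y,
    pref_iff X ((t : ℕ) + 1), pref_iff Y ((t : ℕ) + 1),
    ← merge_one t (fun i => Y i ω = Y i ω')]
  tauto

lemma ident8 (t : Fin T) :
    entropy p (fun ω => (futureRV X t ω, (θ ω, histRV X Y t ω)))
      = FF p θ X Y T (t : ℕ) := by
  unfold FF
  refine entropy_congr p _ _ fun ω ω' => ?_
  simp only [histRV, Prod.mk.injEq]
  rw [future_iff X t, cast_iff t.isLt X, cast_iff (le_of_lt t.isLt) Y,
    pref_iff X T, pref_iff Y (t : ℕ),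
    ← merge_future t (fun i => X i ω = X i ω')]
  tauto

lemma ident9 (t : Fin T) :
    entropy p (fun ω => ((Y t ω, futureRV X t ω), (θ ω, histRV X Y t ω)))
      = FF p θ X Y T ((t : ℕ) + 1) := by
  unfold FF
  refine entropy_congr p _ _ fun ω ω' => ?_
  simp only [histRV, Prod.mk.injEq]
  rw [future_iff X t, cast_iff t.isLt X, cast_iff (le_of_lt t.isLt) Y,
    pref_iff X T, pref_iff Y ((t : ℕ) + 1),
    ← merge_future t (fun i => X i ω = X i ω'),
    ← merge_one t (fun i => Y i ω = Y i ω')]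
  tauto

lemma ident10 (t : Fin T) :
    entropy p (fun ω => (θ ω, histRV X Y t ω)) = FF p θ X Y ((t : ℕ) + 1) (t : ℕ) := by
  unfold FF
  refine entropy_congr p _ _ fun ω ω' => ?_
  simp only [histRV, Prod.mk.injEq]
  rw [cast_iff t.isLt X, cast_iff (le_of_lt t.isLt) Y,
    pref_iff X ((t : ℕ) + 1), pref_iff Y (t : ℕ)]

lemma ident11 :
    entropy p (fun ω => ((fun i : Fin T => Y i ω), (θ ω, fun i : Fin T => X i ω)))
      = FF p θ X Y T T := by
  unfold FF
  refine entropy_congr p _ _ fun ω ω' => ?_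
  simp only [Prod.mk.injEq]
  rw [all_iff X, all_iff Y, pref_iff X T, pref_iff Y T]
  tauto

lemma ident12 :
    entropy p (fun ω => (θ ω, fun i : Fin T => X i ω)) = FF p θ X Y T 0 := by
  unfold FF
  refine entropy_congr p _ _ fun ω ω' => ?_
  simp only [Prod.mk.injEq]
  rw [all_iff X, pref_iff X T, pref_iff Y 0, triv_pref]
  tauto

lemma ident13 :
    entropy p (fun ω => ((fun i : Fin T => X i ω), fun i : Fin T => Y i ω))
      = EE p X Y T T := by
  unfold EE
  refine entropy_congr p _ _ fun ω ω' => ?_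
  simp only [Prod.mk.injEq]
  rw [all_iff X, all_iff Y, pref_iff X T, pref_iff Y T]

lemma ident14 :
    entropy p (fun ω => (θ ω, (fun i : Fin T => X i ω), fun i : Fin T => Y i ω))
      = FF p θ X Y T T := by
  unfold FF
  refine entropy_congr p _ _ fun ω ω' => ?_
  simp only [Prod.mk.injEq]
  rw [all_iff X, all_iff Y, pref_iff X T, pref_iff Y T]

lemma ident15 (hp1 : ∑ ω, p ω = 1) : EE p X Y 0 0 = 0 := by
  have h : EE p X Y 0 0 = entropy p (fun _ : Ω => ()) := by
    unfold EE
    refine entropy_congr p _ _ fun ω ω' => ?_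
    simp only [Prod.mk.injEq]
    constructor
    · intro _; trivial
    · intro _
      constructor <;> (funext i; simp)
  rw [h]
  exact entropy_const p hp1 ()

lemma ident16 : FF p θ X Y 0 0 = entropy p θ := by
  unfold FF
  refine entropy_congr p _ _ fun ω ω' => ?_
  simp only [Prod.mk.injEq]
  constructor
  · rintro ⟨h, -⟩; exact h
  · intro h
    refine ⟨h, ?_, ?_⟩ <;> (funext i; simp)

end Ident

/-- optimal error equals total information. -/
theorem statement0 {Ω Θ 𝒳 𝒴 : Type*} [Fintype Ω] [Fintype Θ] [Fintype 𝒳] [Fintype 𝒴]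
    (p : Ω → ℝ) (hp0 : ∀ ω, 0 ≤ p ω) (hp1 : ∑ ω, p ω = 1)
    (T : ℕ) (hT : 1 ≤ T)
    (θ : Ω → Θ) (X : Fin T → Ω → 𝒳) (Y : Fin T → Ω → 𝒴)
    (hinput : ∀ t : Fin T, condMutualInfo p (X t) θ (pastRV X Y t) = 0)
    (hlabel : ∀ t : Fin T, condMutualInfo p (Y t) (futureRV X t)
      (fun ω => (θ ω, histRV X Y t ω)) = 0) :
    (1 / (T : ℝ)) * (∑ t : Fin T, condEntropy p (Y t) (histRV X Y t))
        - condEntropy p (fun ω => (fun i : Fin T => Y i ω))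
            (fun ω => (θ ω, fun i : Fin T => X i ω)) / (T : ℝ)
      = mutualInfo p θ
          (fun ω => ((fun i : Fin T => X i ω), (fun i : Fin T => Y i ω))) / (T : ℝ) := by
  have hin : ∀ t : Fin T,
      EE p X Y ((t : ℕ) + 1) (t : ℕ) + FF p θ X Y (t : ℕ) (t : ℕ)
        - FF p θ X Y ((t : ℕ) + 1) (t : ℕ) - EE p X Y (t : ℕ) (t : ℕ) = 0 := by
    intro t
    have h0 := hinput t
    simp only [condMutualInfo] at h0
    rw [ident3 p X Y t, ident4 p θ X Y t, ident5 p θ X Y t, ident6 p X Y t] at h0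
    exact h0
  have hlab : ∀ t : Fin T,
      FF p θ X Y ((t : ℕ) + 1) ((t : ℕ) + 1) + FF p θ X Y T (t : ℕ)
        - FF p θ X Y T ((t : ℕ) + 1) - FF p θ X Y ((t : ℕ) + 1) (t : ℕ) = 0 := by
    intro t
    have h0 := hlabel t
    simp only [condMutualInfo] at h0
    rw [ident7 p θ X Y t, ident8 p θ X Y t, ident9 p θ X Y t, ident10 p θ X Y t] at h0
    exact h0
  have hsum : ∑ t : Fin T, condEntropy p (Y t) (histRV X Y t)
      = EE p X Y T T + FF p θ X Y 0 0 - FF p θ X Y T 0 := by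
    have e2 : ∑ t : Fin T, condEntropy p (Y t) (histRV X Y t)
        = ∑ i ∈ Finset.range T,
            ((EE p X Y (i + 1) (i + 1) - EE p X Y i i)
              - (FF p θ X Y (i + 1) (i + 1) - FF p θ X Y i i)
              + (FF p θ X Y T (i + 1) - FF p θ X Y T i)) := by
      rw [← Fin.sum_univ_eq_sum_range (fun i =>
        (EE p X Y (i + 1) (i + 1) - EE p X Y i i)
          - (FF p θ X Y (i + 1) (i + 1) - FF p θ X Y i i)
          + (FF p θ X Y T (i + 1) - FF p θ X Y T i)) T]
      refine Finset.sum_congr rfl fun t _ => ?_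
      simp only [condEntropy]
      rw [ident1 p X Y t, ident2 p X Y t]
      have h1 := hin t
      have h2 := hlab t
      linarith
    have t1 : ∑ i ∈ Finset.range T, (EE p X Y (i + 1) (i + 1) - EE p X Y i i)
        = EE p X Y T T - EE p X Y 0 0 := Finset.sum_range_sub (fun n => EE p X Y n n) T
    have t2 : ∑ i ∈ Finset.range T, (FF p θ X Y (i + 1) (i + 1) - FF p θ X Y i i)
        = FF p θ X Y T T - FF p θ X Y 0 0 := Finset.sum_range_sub (fun n => FF p θ X Y n n) T
    have t3 : ∑ i ∈ Finset.range T, (FF p θ X Y T (i + 1) - FF p θ X Y T i)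
        = FF p θ X Y T T - FF p θ X Y T 0 := Finset.sum_range_sub (fun n => FF p θ X Y T n) T
    rw [e2]
    rw [Finset.sum_add_distrib, Finset.sum_sub_distrib, t1, t2, t3,
      ident15 p X Y hp1]
    ring
  have hC : condEntropy p (fun ω => (fun i : Fin T => Y i ω))
      (fun ω => (θ ω, fun i : Fin T => X i ω)) = FF p θ X Y T T - FF p θ X Y T 0 := by
    simp only [condEntropy]
    rw [ident11 p θ X Y, ident12 p θ X Y]
  have hM : mutualInfo p θ
      (fun ω => ((fun i : Fin T => X i ω), (fun i : Fin T => Y i ω)))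
      = entropy p θ + EE p X Y T T - FF p θ X Y T T := by
    simp only [mutualInfo]
    rw [ident13 p X Y, ident14 p θ X Y]
  rw [hsum, hC, hM, ident16 p θ X Y]
  ring

end
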